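/- Suppose m ∈ ℕ and θ₁, …, θ_{2m−4} are 2m−4 distinct angles, each strictly between 0 and π. Suppose that for some m' with 3 ≤ m' < m there is a set P of m' points in the plane realising some subset of 2m'−4 of these angles that includes the maximum angle among θ₁, …, θ_{2m−4}. Then there is a set of m points in the plane realising all 2m−4 of the angles. -/

import Mathlib

open EuclideanGeometry

/-- A set `P` of points realises the angle `θ` if some three points of `P`
form this angle. -/
def Realises {d : ℕ} (P : Set (EuclideanSpace ℝ (Fin d))) (θ : ℝ) : Prop :=
  ∃ A B C : EuclideanSpace ℝ (Fin d),
    A ∈ P ∧ B ∈ P ∧ C ∈ P ∧ A ≠ B ∧ C ≠ B ∧ EuclideanGeometry.angle A B C = θ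

/-- The ray from `B` towards `A`, encoded by its vertex together with the
unit vector in its direction. -/
noncomputable def rayOf {d : ℕ} (B A : EuclideanSpace ℝ (Fin d)) :
    EuclideanSpace ℝ (Fin d) × EuclideanSpace ℝ (Fin d) :=
  (B, ‖A - B‖⁻¹ • (A - B))

/-- A tuple `θ` of angles is realised with multiplicity by `P` if each `θ i` is
realised at some vertex `B i` by points `A i, C i` of `P`, with the unordered
pairs of rays pairwise distinct. -/
def RealisesMult {d n : ℕ} (P : Set (EuclideanSpace ℝ (Fin d))) (θ : Fin n → ℝ) : Prop :=
  ∃ A B C : Fin n → EuclideanSpace ℝ (Fin d),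
    (∀ i, A i ∈ P ∧ B i ∈ P ∧ C i ∈ P ∧ A i ≠ B i ∧ C i ≠ B i ∧
      EuclideanGeometry.angle (A i) (B i) (C i) = θ i) ∧
    Function.Injective fun i =>
      ({rayOf (B i) (A i), rayOf (B i) (C i)} :
        Set (EuclideanSpace ℝ (Fin d) × EuclideanSpace ℝ (Fin d)))

noncomputable section AngleHelpers

open InnerProductGeometry Real

instance : Fact (Module.finrank ℝ (EuclideanSpace ℝ (Fin 2)) = 2) :=
  ⟨finrank_euclideanSpace_fin⟩

lemma realises_mono {d : ℕ} {P Q : Set (EuclideanSpace ℝ (Fin d))} (h : P ⊆ Q) {x : ℝ}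
    (hx : Realises P x) : Realises Q x := by
  obtain ⟨A, B, C, hA, hB, hC, h1, h2, h3⟩ := hx
  exact ⟨A, B, C, h hA, h hB, h hC, h1, h2, h3⟩

lemma euclidean_angle_eq (A B C : EuclideanSpace ℝ (Fin 2)) :
    EuclideanGeometry.angle A B C = InnerProductGeometry.angle (A - B) (C - B) := by
  simp [EuclideanGeometry.angle, vsub_eq_sub]

lemma exists_realising_one (B C : EuclideanSpace ℝ (Fin 2)) (hCB : C ≠ B) {x : ℝ}
    (hx0 : 0 < x) (hxπ : x < π) :
    ∃ D : EuclideanSpace ℝ (Fin 2), D ≠ B ∧ EuclideanGeometry.angle D B C = x := by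
  set o : Orientation ℝ (EuclideanSpace ℝ (Fin 2)) (Fin 2) :=
    (EuclideanSpace.basisFun (Fin 2) ℝ).toBasis.orientation with ho
  set y : EuclideanSpace ℝ (Fin 2) := C - B with hy
  have hy0 : y ≠ 0 := sub_ne_zero.2 hCB
  have hrot : o.rotation ((-x : ℝ) : Real.Angle) y ≠ 0 :=
    fun h => hy0 ((LinearIsometryEquiv.map_eq_zero_iff _).1 h)
  refine ⟨B + o.rotation ((-x : ℝ) : Real.Angle) y, ?_, ?_⟩
  · intro h
    exact hrot (by simpa using h)
  · rw [euclidean_angle_eq, add_sub_cancel_left,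
      o.angle_eq_abs_oangle_toReal hrot hy0, o.oangle_rotation_self_left hy0,
      ← Real.Angle.coe_neg, neg_neg,
      Real.Angle.toReal_coe_eq_self_iff.2 ⟨by linarith, hxπ.le⟩, abs_of_pos hx0]

lemma exists_realising_two (A B C : EuclideanSpace ℝ (Fin 2)) (hAB : A ≠ B) (hCB : C ≠ B)
    {α β : ℝ} (hα : 0 < α) (hαβ : α < β) (hβγ : β < EuclideanGeometry.angle A B C)
    (hγπ : EuclideanGeometry.angle A B C < π) :
    ∃ D : EuclideanSpace ℝ (Fin 2), D ≠ B ∧ D ≠ A ∧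
      EuclideanGeometry.angle D B C = β ∧ EuclideanGeometry.angle A D B = α := by
  set γ := EuclideanGeometry.angle A B C with hγdef
  set x : EuclideanSpace ℝ (Fin 2) := A - B with hxdef
  set y : EuclideanSpace ℝ (Fin 2) := C - B with hydef
  have hx0 : x ≠ 0 := sub_ne_zero.2 hAB
  have hy0 : y ≠ 0 := sub_ne_zero.2 hCB
  have hγ0 : 0 < γ := lt_trans (lt_trans hα hαβ) hβγ
  have hxy : InnerProductGeometry.angle x y = γ := (euclidean_angle_eq A B C).symm
  obtain ⟨o, ho⟩ : ∃ o : Orientation ℝ (EuclideanSpace ℝ (Fin 2)) (Fin 2),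
      o.oangle x y = ((γ : ℝ) : Real.Angle) := by
    set o₀ : Orientation ℝ (EuclideanSpace ℝ (Fin 2)) (Fin 2) :=
      (EuclideanSpace.basisFun (Fin 2) ℝ).toBasis.orientation
    rcases o₀.oangle_eq_angle_or_eq_neg_angle hx0 hy0 with h | h
    · exact ⟨o₀, by rw [h, hxy]⟩
    · exact ⟨-o₀, by rw [Orientation.oangle_neg_orientation_eq_neg, h, hxy, neg_neg]⟩
  set w : EuclideanSpace ℝ (Fin 2) := o.rotation ((γ - β : ℝ) : Real.Angle) x with hwdef
  have hw0 : w ≠ 0 := fun h => hx0 ((LinearIsometryEquiv.map_eq_zero_iff _).1 h)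
  have hγβ0 : 0 < γ - β := sub_pos.2 hβγ
  have hγβπ : γ - β < π := by linarith
  have hwy : InnerProductGeometry.angle w y = β := by
    rw [o.angle_eq_abs_oangle_toReal hw0 hy0, hwdef, o.oangle_rotation_left hx0 hy0, ho,
      ← Real.Angle.coe_sub]
    have h1 : γ - (γ - β) = β := by ring
    rw [h1, Real.Angle.toReal_coe_eq_self_iff.2 ⟨by linarith, by linarith⟩,
      abs_of_pos (by linarith)]
  have hxw : InnerProductGeometry.angle x w = γ - β := by
    rw [o.angle_eq_abs_oangle_toReal hx0 hw0, hwdef, o.oangle_rotation_self_right hx0,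
      Real.Angle.toReal_coe_eq_self_iff.2 ⟨by linarith, hγβπ.le⟩, abs_of_pos hγβ0]
  have hray : ∀ s : ℝ, 0 < s → x ≠ s • w := by
    intro s hs h
    rw [h, InnerProductGeometry.angle_smul_left_of_pos _ _ hs,
      InnerProductGeometry.angle_self hw0] at hxw
    linarith
  set z : EuclideanSpace ℝ (Fin 2) := B - A with hzdef
  have hzx : z = -x := by rw [hzdef, hxdef]; abel
  have hz0 : z ≠ 0 := by rw [hzx]; exact neg_ne_zero.2 hx0
  have hnz : ∀ s : ℝ, 0 ≤ s → z + s • w ≠ 0 := by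
    intro s hs h
    rcases eq_or_lt_of_le hs with hs0 | hs'
    · rw [← hs0, zero_smul, add_zero] at h
      exact hz0 h
    · refine hray s hs' ?_
      rw [hzx, neg_add_eq_zero] at h
      exact h
  have hwz : InnerProductGeometry.angle w z = π - (γ - β) := by
    rw [hzx, InnerProductGeometry.angle_neg_right, InnerProductGeometry.angle_comm, hxw]
  set T : ℝ := π - α - (γ - β) with hTdef
  have hT0 : 0 < T := by rw [hTdef]; linarith
  have hTlt : T < π - (γ - β) := by rw [hTdef]; linarith
  set g : ℝ → ℝ := fun s => InnerProductGeometry.angle (z + s • w) z with hgdef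
  have hlim : Filter.Tendsto (fun u : ℝ => InnerProductGeometry.angle (u • z + w) z)
      (nhds (0:ℝ)) (nhds (π - (γ - β))) := by
    have h1 : Filter.Tendsto (fun u : ℝ =>
        ((u • z + w, z) : (EuclideanSpace ℝ (Fin 2)) × (EuclideanSpace ℝ (Fin 2))))
        (nhds (0:ℝ)) (nhds (w, z)) := by
      have : Filter.Tendsto (fun u : ℝ => u • z + w) (nhds (0:ℝ)) (nhds w) := by
        have hc : Continuous (fun u : ℝ => u • z + w) := by fun_prop
        have := hc.tendsto 0
        simpa using this
      exact this.prodMk_nhds tendsto_const_nhds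
    have h2 : ContinuousAt (fun p : (EuclideanSpace ℝ (Fin 2)) × (EuclideanSpace ℝ (Fin 2)) =>
        InnerProductGeometry.angle p.1 p.2) (w, z) :=
      InnerProductGeometry.continuousAt_angle hw0 hz0
    have h3 := h2.tendsto.comp h1
    simpa [Function.comp_def, hwz] using h3
  have hev : ∀ᶠ u : ℝ in nhds (0:ℝ), T < InnerProductGeometry.angle (u • z + w) z :=
    hlim.eventually (eventually_gt_nhds hTlt)
  have hev2 : ∀ᶠ u : ℝ in nhdsWithin (0:ℝ) (Set.Ioi 0),
      T < InnerProductGeometry.angle (u • z + w) z := hev.filter_mono nhdsWithin_le_nhds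
  obtain ⟨u, huT, hu0⟩ := (hev2.and eventually_mem_nhdsWithin).exists
  have hu0' : 0 < u := hu0
  set s₀ : ℝ := u⁻¹ with hs₀def
  have hs₀ : 0 < s₀ := inv_pos.2 hu0'
  have hgs₀ : T < g s₀ := by
    have hrw : u • (z + s₀ • w) = u • z + w := by
      rw [smul_add, smul_smul, hs₀def, mul_inv_cancel₀ (ne_of_gt hu0'), one_smul]
    have : g s₀ = InnerProductGeometry.angle (u • (z + s₀ • w)) z := by
      rw [InnerProductGeometry.angle_smul_left_of_pos _ _ hu0']
    rw [this, hrw]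
    exact huT
  have hgc : ContinuousOn g (Set.Icc 0 s₀) := by
    intro s hs
    have h1 : z + s • w ≠ 0 := hnz s hs.1
    have hca : ContinuousAt (fun p : (EuclideanSpace ℝ (Fin 2)) × (EuclideanSpace ℝ (Fin 2)) =>
        InnerProductGeometry.angle p.1 p.2) (z + s • w, z) :=
      InnerProductGeometry.continuousAt_angle h1 hz0
    have hc2 : Filter.Tendsto (fun s' : ℝ =>
        ((z + s' • w, z) : (EuclideanSpace ℝ (Fin 2)) × (EuclideanSpace ℝ (Fin 2))))
        (nhds s) (nhds (z + s • w, z)) := by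
      have hc : Continuous (fun s' : ℝ => z + s' • w) := by fun_prop
      exact (hc.tendsto s).prodMk_nhds tendsto_const_nhds
    have h3 := hca.tendsto.comp hc2
    have : ContinuousAt g s := by
      simpa [g, Function.comp_def, ContinuousAt] using h3
    exact this.continuousWithinAt
  have hg0 : g 0 = 0 := by
    have : z + (0:ℝ) • w = z := by rw [zero_smul, add_zero]
    rw [hgdef]
    simp only
    rw [this]
    exact InnerProductGeometry.angle_self hz0
  have hmem : T ∈ Set.Icc (g 0) (g s₀) := ⟨by rw [hg0]; exact hT0.le, hgs₀.le⟩
  obtain ⟨s, hsmem, hgs⟩ := intermediate_value_Icc hs₀.le hgc hmem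
  have hs0 : 0 < s := by
    rcases eq_or_lt_of_le hsmem.1 with h | h
    · exfalso; rw [← h] at hgs; rw [hg0] at hgs; linarith
    · exact h
  have hsw0 : s • w ≠ 0 := smul_ne_zero (ne_of_gt hs0) hw0
  refine ⟨B + s • w, ?_, ?_, ?_, ?_⟩
  · intro h
    exact hsw0 (by simpa using h)
  · intro h
    refine hray s hs0 ?_
    have : s • w = A - B := by rw [← h]; abel
    rw [hxdef, ← this]
  · rw [euclidean_angle_eq, add_sub_cancel_left, ← hydef,
      InnerProductGeometry.angle_smul_left_of_pos _ _ hs0, hwy]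
  · -- angle sum in triangle A, B, D
    have hDA : A ≠ B + s • w := by
      intro h
      refine hray s hs0 ?_
      have : s • w = A - B := by rw [h]; abel
      rw [hxdef, ← this]
    have hDB : B ≠ B + s • w := by
      intro h
      exact hsw0 (by simpa using h.symm)
    have hsum := EuclideanGeometry.angle_add_angle_add_angle_eq_pi
      (p₁ := B + s • w) B hDA
    have hDAB : EuclideanGeometry.angle (B + s • w) A B = T := by
      have harg : (B + s • w) - A = z + s • w := by rw [hzdef]; abel
      rw [euclidean_angle_eq, harg, ← hzdef]
      exact hgs
    have hABD : EuclideanGeometry.angle A B (B + s • w) = γ - β := by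
      rw [euclidean_angle_eq, add_sub_cancel_left, ← hxdef,
        InnerProductGeometry.angle_smul_right_of_pos _ _ hs0, hxw]
    rw [hDAB, hABD, EuclideanGeometry.angle_comm B (B + s • w) A] at hsum
    rw [hTdef] at hsum
    linarith

lemma aux_realise (A B C : EuclideanSpace ℝ (Fin 2)) (hAB : A ≠ B) (hCB : C ≠ B)
    (hγπ : EuclideanGeometry.angle A B C < Real.pi) :
    ∀ (n : ℕ) (L : List ℝ), L.length ≤ n → L.Pairwise (· ≠ ·) →
      (∀ x ∈ L, 0 < x ∧ x < EuclideanGeometry.angle A B C) →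
      ∀ R : Finset (EuclideanSpace ℝ (Fin 2)), A ∈ R → B ∈ R → C ∈ R →
      ∃ R' : Finset (EuclideanSpace ℝ (Fin 2)), R ⊆ R' ∧
        R'.card ≤ R.card + (L.length + 1) / 2 ∧
        ∀ x ∈ L, Realises (↑R' : Set (EuclideanSpace ℝ (Fin 2))) x := by
  classical
  intro n
  induction n with
  | zero =>
    intro L hL _ _ R _ _ _
    have : L = [] := List.eq_nil_of_length_eq_zero (Nat.le_zero.1 hL)
    subst this
    exact ⟨R, subset_rfl, by simp, by simp⟩
  | succ n ih =>
    intro L hL hpw hmem R hA hB hC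
    match L with
    | [] => exact ⟨R, subset_rfl, by simp, by simp⟩
    | [a] =>
      obtain ⟨ha0, haγ⟩ := hmem a (by simp)
      obtain ⟨D, hD, hDa⟩ := exists_realising_one B C hCB ha0 (haγ.trans hγπ)
      refine ⟨insert D R, Finset.subset_insert _ _, ?_, ?_⟩
      · have := Finset.card_insert_le D R
        simpa using this
      · intro x hx
        simp only [List.mem_singleton] at hx
        subst hx
        exact ⟨D, B, C, by simp, by simp [hB], by simp [hC], hD, hCB, hDa⟩
    | a :: b :: L' =>
      have hab : a ≠ b := by
        have := (List.pairwise_cons.1 hpw).1 b (by simp)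
        exact this
      have hpw' : L'.Pairwise (· ≠ ·) :=
        (List.pairwise_cons.1 (List.pairwise_cons.1 hpw).2).2
      have ha := hmem a (by simp)
      have hb := hmem b (by simp)
      have hα0 : 0 < min a b := lt_min ha.1 hb.1
      have hαβ : min a b < max a b := min_lt_max.2 hab
      have hβγ : max a b < EuclideanGeometry.angle A B C := max_lt ha.2 hb.2
      obtain ⟨D, hDB, hDA, h1, h2⟩ := exists_realising_two A B C hAB hCB hα0 hαβ hβγ hγπ
      have hrealβ : Realises (↑(insert D R) : Set (EuclideanSpace ℝ (Fin 2))) (max a b) :=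
        ⟨D, B, C, by simp, by simp [hB], by simp [hC], hDB, hCB, h1⟩
      have hrealα : Realises (↑(insert D R) : Set (EuclideanSpace ℝ (Fin 2))) (min a b) :=
        ⟨A, D, B, by simp [hA], by simp, by simp [hB], Ne.symm hDA, Ne.symm hDB, h2⟩
      obtain ⟨R', hsub, hcard, hreal'⟩ := ih L' (by simp at hL ⊢; omega) hpw'
        (fun x hx => hmem x (by simp [hx])) (insert D R)
        (Finset.mem_insert_of_mem hA) (Finset.mem_insert_of_mem hB)
        (Finset.mem_insert_of_mem hC)
      have hsub' : R ⊆ R' := (Finset.subset_insert _ _).trans hsub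
      refine ⟨R', hsub', ?_, ?_⟩
      · have h3 := Finset.card_insert_le D R
        simp only [List.length_cons] at hcard ⊢
        omega
      · intro x hx
        have hmono : (↑(insert D R) : Set (EuclideanSpace ℝ (Fin 2))) ⊆ ↑R' := by
          exact_mod_cast hsub
        simp only [List.mem_cons] at hx
        rcases hx with rfl | rfl | hx
        · rcases le_total x b with h | h
          · have : x = min x b := (min_eq_left h).symm
            rw [this]; exact realises_mono hmono hrealα
          · have : x = max x b := (max_eq_left h).symm
            rw [this]; exact realises_mono hmono hrealβ
        · rcases le_total a x with h | h
          · have : x = max a x := (max_eq_right h).symm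
            rw [this]; exact realises_mono hmono hrealβ
          · have : x = min a x := (min_eq_right h).symm
            rw [this]; exact realises_mono hmono hrealα
        · exact hreal' x hx


instance : Infinite (EuclideanSpace ℝ (Fin 2)) :=
  Infinite.of_injective (WithLp.equiv 2 (Fin 2 → ℝ)).symm (Equiv.injective _)

/-- if `2m'-4` of the `2m-4` distinct angles, including the maximum
one, are realised by `m'` points in the plane (`3 ≤ m' < m`), then all `2m-4`
angles can be realised by `m` points in the plane. -/
theorem statement3 (m : ℕ) (θ : Fin (2 * m - 4) → ℝ)
    (hinj : Function.Injective θ)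
    (hθ : ∀ i, θ i ∈ Set.Ioo 0 Real.pi)
    (m' : ℕ) (hm'3 : 3 ≤ m') (hm' : m' < m)
    (P : Finset (EuclideanSpace ℝ (Fin 2))) (hP : P.card = m')
    (I : Finset (Fin (2 * m - 4))) (hI : I.card = 2 * m' - 4)
    (hreal : ∀ i ∈ I, Realises (P : Set (EuclideanSpace ℝ (Fin 2))) (θ i))
    (hmax : ∃ i₀ ∈ I, ∀ j, θ j ≤ θ i₀) :
    ∃ Q : Finset (EuclideanSpace ℝ (Fin 2)), Q.card = m ∧
      ∀ i, Realises (Q : Set (EuclideanSpace ℝ (Fin 2))) (θ i) := by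
  classical
  obtain ⟨i₀, hi₀I, hmaxi⟩ := hmax
  obtain ⟨A, B, C, hA, hB, hC, hAB, hCB, hγ⟩ := hreal i₀ hi₀I
  have hγπ : EuclideanGeometry.angle A B C < Real.pi := by rw [hγ]; exact (hθ i₀).2
  set L : List ℝ := Iᶜ.toList.map θ with hLdef
  have hlen : L.length = 2 * m - 4 - (2 * m' - 4) := by
    simp [hLdef, Finset.length_toList, Finset.card_compl, hI]
  have hpw : L.Pairwise (· ≠ ·) := (Finset.nodup_toList _).map hinj
  have hmemL : ∀ x ∈ L, 0 < x ∧ x < EuclideanGeometry.angle A B C := by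
    intro x hx
    rw [hLdef, List.mem_map] at hx
    obtain ⟨j, hj, rfl⟩ := hx
    have hjI : j ∉ I := by simpa using Finset.mem_toList.1 hj
    have hji₀ : j ≠ i₀ := fun h => hjI (h ▸ hi₀I)
    refine ⟨(hθ j).1, ?_⟩
    rw [hγ]
    exact lt_of_le_of_ne (hmaxi j) (fun h => hji₀ (hinj h))
  obtain ⟨R', hsub, hcard, hrealL⟩ := aux_realise A B C hAB hCB hγπ L.length L le_rfl hpw hmemL P
    (Finset.mem_coe.1 hA) (Finset.mem_coe.1 hB) (Finset.mem_coe.1 hC)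
  have hcard' : R'.card ≤ m := by
    rw [hP] at hcard
    omega
  obtain ⟨Q, hQsub, hQcard⟩ := Infinite.exists_superset_card_eq R' m hcard'
  refine ⟨Q, hQcard, ?_⟩
  intro i
  have hmono : (↑R' : Set (EuclideanSpace ℝ (Fin 2))) ⊆ ↑Q := by exact_mod_cast hQsub
  by_cases hiI : i ∈ I
  · refine realises_mono (subset_trans ?_ hmono) (hreal i hiI)
    exact_mod_cast hsub
  · refine realises_mono hmono (hrealL (θ i) ?_)
    rw [hLdef, List.mem_map]
    exact ⟨i, Finset.mem_toList.2 (Finset.mem_compl.2 hiI), rfl⟩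

end AngleHelpers
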